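/- arXiv:2011.07726 — 5 statements merged into one kernel-verified Lean document; each statement's English description precedes it below -/
import Mathlib

section
/- Let x_1,…,x_n and y_1,…,y_n be distinct complex numbers (with x_i ≠ y_j for all i,j), and let C be the Cauchy matrix with entries C_{ij} = 1/(x_i - y_j). Then for any functions f, g : ℂ → ℂ, det[C_{ij} + f(x_i)g(y_j)] = det C · (1 − ∑_{k,ℓ=1}^n f(x_ℓ) B(x_ℓ) A(y_k) g(y_k) / ((x_ℓ − y_k) A'(x_ℓ) B'(y_k))), where A(z) = ∏_{i=1}^n (z − x_i) and B(z) = ∏_{i=1}^n (z − y_i). -/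
open scoped BigOperators

section CauchyAux
open Finset Polynomial Matrix

/-- Derivative of `z ↦ ∏ (z - x i)` at a root `x ℓ`. -/
lemma cauchy_aux_deriv_prod_sub {n : ℕ} (x : Fin n → ℂ) (hx : Function.Injective x) (ℓ : Fin n) :
    deriv (fun z : ℂ => ∏ i, (z - x i)) (x ℓ) = ∏ i ∈ univ.erase ℓ, (x ℓ - x i) := by
  have h := deriv_finset_prod (u := (univ : Finset (Fin n)))
      (f := fun i : Fin n => fun z : ℂ => z - x i) (x := x ℓ)
      (fun i _ => (differentiable_id.sub_const _).differentiableAt)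
  have h2 : deriv (fun z : ℂ => ∏ i, (z - x i)) (x ℓ)
      = ∑ i : Fin n, (∏ j ∈ univ.erase i, (x ℓ - x j)) •
          deriv (fun z : ℂ => z - x i) (x ℓ) := by
    rw [← h]; congr 1; funext z; rw [Finset.prod_apply]
  rw [h2]
  rw [Finset.sum_eq_single ℓ]
  · simp [deriv_sub_const]
  · intro i _ hiℓ
    have hℓ : ℓ ∈ univ.erase i := mem_erase.mpr ⟨fun h => hiℓ h.symm, mem_univ ℓ⟩
    rw [Finset.prod_eq_zero hℓ (by simp)]
    simp
  · simp

/-- Lagrange interpolation identity. -/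
lemma cauchy_aux_lagrange {n : ℕ} (y : Fin n → ℂ) (hy : Function.Injective y)
    (P : Polynomial ℂ) (hP : P.degree < n) (z : ℂ) :
    ∑ j, P.eval (y j) / (∏ m ∈ univ.erase j, (y j - y m)) * ∏ m ∈ univ.erase j, (z - y m)
      = P.eval z := by
  classical
  have hB' : ∀ j : Fin n, (∏ m ∈ univ.erase j, (y j - y m)) ≠ 0 := by
    intro j
    refine Finset.prod_ne_zero_iff.mpr fun m hm => sub_ne_zero.mpr fun h => ?_
    exact (mem_erase.mp hm).1 (hy h.symm)
  set Q : Polynomial ℂ := ∑ j : Fin n,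
      C (P.eval (y j) / ∏ m ∈ univ.erase j, (y j - y m)) *
        ∏ m ∈ univ.erase j, (X - C (y m)) with hQ
  have hcard : ((univ : Finset (Fin n)).card : ℕ) = n := by simp
  have hdegQ : Q.degree < (univ : Finset (Fin n)).card := by
    rw [hcard]
    refine lt_of_le_of_lt (Polynomial.degree_sum_le _ _) ?_
    rw [Finset.sup_lt_iff (by exact_mod_cast WithBot.bot_lt_coe n)]
    intro j _
    refine lt_of_le_of_lt (Polynomial.degree_mul_le _ _) ?_
    have h1 : (C (P.eval (y j) / ∏ m ∈ univ.erase j, (y j - y m))).degree ≤ 0 :=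
      Polynomial.degree_C_le
    have h2 : (∏ m ∈ univ.erase j, (X - C (y m))).degree = ((univ.erase j).card : WithBot ℕ) := by
      rw [Polynomial.degree_prod]
      simp [Polynomial.degree_X_sub_C]
    have h3 : (univ.erase j).card < n := by
      rw [Finset.card_erase_of_mem (mem_univ j)]
      simpa using Nat.sub_lt (Fin.pos j) one_pos
    calc (C (P.eval (y j) / ∏ m ∈ univ.erase j, (y j - y m))).degree
          + (∏ m ∈ univ.erase j, (X - C (y m))).degree
        ≤ 0 + ((univ.erase j).card : WithBot ℕ) := add_le_add h1 (le_of_eq h2)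
      _ = ((univ.erase j).card : WithBot ℕ) := zero_add _
      _ < (n : WithBot ℕ) := by exact_mod_cast h3
  have hdegP : P.degree < (univ : Finset (Fin n)).card := by rw [hcard]; exact hP
  have hQP : Q = P := by
    refine Polynomial.eq_of_degrees_lt_of_eval_index_eq (v := y) univ
      (hy.injOn) hdegQ hdegP ?_
    intro i _
    rw [hQ]
    rw [Polynomial.eval_finset_sum]
    rw [Finset.sum_eq_single i]
    · rw [Polynomial.eval_mul, Polynomial.eval_C, Polynomial.eval_prod]
      simp only [Polynomial.eval_sub, Polynomial.eval_X, Polynomial.eval_C]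
      exact div_mul_cancel₀ _ (hB' i)
    · intro j _ hji
      have hi : i ∈ univ.erase j := mem_erase.mpr ⟨fun h => hji h.symm, mem_univ i⟩
      have hz : (∏ m ∈ univ.erase j, Polynomial.eval (y i) (X - C (y m))) = 0 :=
        Finset.prod_eq_zero hi (by simp)
      rw [Polynomial.eval_mul, Polynomial.eval_prod, hz, mul_zero]
    · simp
  calc ∑ j, P.eval (y j) / (∏ m ∈ univ.erase j, (y j - y m)) * ∏ m ∈ univ.erase j, (z - y m)
      = Q.eval z := by
        rw [hQ, Polynomial.eval_finset_sum]
        refine Finset.sum_congr rfl fun j _ => ?_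
        rw [Polynomial.eval_mul, Polynomial.eval_C, Polynomial.eval_prod]
        simp
    _ = P.eval z := by rw [hQP]

/-- Key Cauchy-kernel summation identity. -/
lemma cauchy_aux_key {n : ℕ} (x y : Fin n → ℂ) (hy : Function.Injective y)
    (hxy : ∀ i j, x i ≠ y j) (i ℓ : Fin n) :
    ∑ j, (∏ m ∈ univ.erase ℓ, (y j - x m)) /
        ((x i - y j) * ∏ m ∈ univ.erase j, (y j - y m))
      = (∏ m ∈ univ.erase ℓ, (x i - x m)) / (∏ m, (x i - y m)) := by
  classical
  set P : Polynomial ℂ := ∏ m ∈ univ.erase ℓ, (X - C (x m)) with hPdef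
  have hPdeg : P.degree < n := by
    rw [hPdef]
    have h2 : (∏ m ∈ univ.erase ℓ, (X - C (x m))).degree
        = ((univ.erase ℓ).card : WithBot ℕ) := by
      rw [Polynomial.degree_prod]; simp [Polynomial.degree_X_sub_C]
    rw [h2]
    have h3 : (univ.erase ℓ).card < n := by
      rw [Finset.card_erase_of_mem (mem_univ ℓ)]
      simpa using Nat.sub_lt (Fin.pos ℓ) one_pos
    exact_mod_cast h3
  have hPy : ∀ j, P.eval (y j) = ∏ m ∈ univ.erase ℓ, (y j - x m) := by
    intro j; rw [hPdef, Polynomial.eval_prod]; simp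
  have hPx : P.eval (x i) = ∏ m ∈ univ.erase ℓ, (x i - x m) := by
    rw [hPdef, Polynomial.eval_prod]; simp
  have L := cauchy_aux_lagrange y hy P hPdeg (x i)
  have hBx : (∏ m, (x i - y m)) ≠ 0 :=
    Finset.prod_ne_zero_iff.mpr fun m _ => sub_ne_zero.mpr (hxy i m)
  rw [eq_div_iff hBx, ← hPx, ← L, Finset.sum_mul]
  refine Finset.sum_congr rfl fun j _ => ?_
  have hc : x i - y j ≠ 0 := sub_ne_zero.mpr (hxy i j)
  have hd : (∏ m ∈ univ.erase j, (y j - y m)) ≠ 0 := by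
    refine Finset.prod_ne_zero_iff.mpr fun m hm => sub_ne_zero.mpr fun h => ?_
    exact (mem_erase.mp hm).1 (hy h.symm)
  rw [hPy j, ← Finset.mul_prod_erase univ (fun m => x i - y m) (mem_univ j)]
  field_simp

theorem cauchy_rank_one_perturbation'
    (n : ℕ) (x y : Fin n → ℂ) (f g : ℂ → ℂ)
    (hx : Function.Injective x) (hy : Function.Injective y)
    (hxy : ∀ i j, x i ≠ y j) :
    Matrix.det (Matrix.of fun i j : Fin n => 1 / (x i - y j) + f (x i) * g (y j)) =
      Matrix.det (Matrix.of fun i j : Fin n => 1 / (x i - y j)) *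
        (1 - ∑ k : Fin n, ∑ ℓ : Fin n,
          f (x ℓ) * (∏ i, (x ℓ - y i)) * (∏ i, (y k - x i)) * g (y k) /
            ((x ℓ - y k) * deriv (fun z => ∏ i, (z - x i)) (x ℓ) *
              deriv (fun z => ∏ i, (z - y i)) (y k))) := by
  classical
  have hA' : ∀ ℓ : Fin n, (∏ m ∈ univ.erase ℓ, (x ℓ - x m)) ≠ 0 := by
    intro ℓ
    refine Finset.prod_ne_zero_iff.mpr fun m hm => sub_ne_zero.mpr fun h => ?_
    exact (mem_erase.mp hm).1 (hx h.symm)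
  have hB' : ∀ j : Fin n, (∏ m ∈ univ.erase j, (y j - y m)) ≠ 0 := by
    intro j
    refine Finset.prod_ne_zero_iff.mpr fun m hm => sub_ne_zero.mpr fun h => ?_
    exact (mem_erase.mp hm).1 (hy h.symm)
  have hBx : ∀ ℓ : Fin n, (∏ m, (x ℓ - y m)) ≠ 0 := fun ℓ =>
    Finset.prod_ne_zero_iff.mpr fun m _ => sub_ne_zero.mpr (hxy ℓ m)
  set M : Matrix (Fin n) (Fin n) ℂ := Matrix.of fun i j => 1 / (x i - y j) with hMdef
  set K : Matrix (Fin n) (Fin n) ℂ := Matrix.of fun j ℓ =>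
    -((∏ m, (x ℓ - y m)) * (∏ m, (y j - x m)) /
        ((x ℓ - y j) * (∏ m ∈ univ.erase ℓ, (x ℓ - x m)) *
          (∏ m ∈ univ.erase j, (y j - y m)))) with hKdef
  have hMK : M * K = 1 := by
    ext i ℓ
    rw [Matrix.mul_apply]
    have step : ∀ j, M i j * K j ℓ
        = (∏ m, (x ℓ - y m)) / (∏ m ∈ univ.erase ℓ, (x ℓ - x m)) *
          ((∏ m ∈ univ.erase ℓ, (y j - x m)) /
            ((x i - y j) * ∏ m ∈ univ.erase j, (y j - y m))) := by
      intro j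
      have hc1 : x i - y j ≠ 0 := sub_ne_zero.mpr (hxy i j)
      have hc2 : x ℓ - y j ≠ 0 := sub_ne_zero.mpr (hxy ℓ j)
      have hc3 := hA' ℓ
      have hc4 := hB' j
      rw [hMdef, hKdef]
      simp only [Matrix.of_apply]
      rw [← Finset.mul_prod_erase univ (fun m => y j - x m) (mem_univ ℓ)]
      field_simp
      ring
    rw [Finset.sum_congr rfl fun j _ => step j, ← Finset.mul_sum,
      cauchy_aux_key x y hy hxy i ℓ]
    by_cases hiℓ : i = ℓ
    · subst hiℓ
      rw [Matrix.one_apply_eq, div_mul_div_comm, mul_comm, div_self]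
      exact mul_ne_zero (hA' i) (hBx i)
    · have hz : (∏ m ∈ univ.erase ℓ, (x i - x m)) = 0 :=
        Finset.prod_eq_zero (mem_erase.mpr ⟨hiℓ, mem_univ i⟩) (by simp)
      rw [Matrix.one_apply_ne hiℓ, hz, zero_div, mul_zero]
  set u : Fin n → ℂ := fun ℓ => f (x ℓ) with hu
  set v : Fin n → ℂ := fun k => g (y k) with hv
  have hMat : (Matrix.of fun i j : Fin n => 1 / (x i - y j) + f (x i) * g (y j))
      = M * (1 + K * (Matrix.replicateCol Unit u * Matrix.replicateRow Unit v)) := by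
    rw [Matrix.mul_add, Matrix.mul_one, ← Matrix.mul_assoc, hMK, Matrix.one_mul]
    ext i j
    simp [Matrix.mul_apply, hMdef, hu, hv]
  rw [hMat, Matrix.det_mul]
  congr 1
  have hcol : K * (Matrix.replicateCol Unit u * Matrix.replicateRow Unit v)
      = Matrix.replicateCol Unit (K *ᵥ u) * Matrix.replicateRow Unit v := by
    rw [Matrix.replicateCol_mulVec, Matrix.mul_assoc]
  rw [hcol, Matrix.det_one_add_replicateCol_mul_replicateRow]
  simp only [cauchy_aux_deriv_prod_sub x hx, cauchy_aux_deriv_prod_sub y hy]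
  have hdot : v ⬝ᵥ K *ᵥ u = ∑ k : Fin n, ∑ ℓ : Fin n,
      -(f (x ℓ) * (∏ i, (x ℓ - y i)) * (∏ i, (y k - x i)) * g (y k) /
        ((x ℓ - y k) * (∏ m ∈ univ.erase ℓ, (x ℓ - x m)) *
          (∏ m ∈ univ.erase k, (y k - y m)))) := by
    simp only [dotProduct, Matrix.mulVec, Finset.mul_sum, hKdef, hu, hv,
      Matrix.of_apply]
    refine Finset.sum_congr rfl fun k _ => Finset.sum_congr rfl fun ℓ _ => ?_
    ring
  rw [hdot, sub_eq_add_neg]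
  congr 1
  rw [← Finset.sum_neg_distrib]
  refine Finset.sum_congr rfl fun k _ => ?_
  rw [← Finset.sum_neg_distrib]

end CauchyAux

/-- Rank-one perturbation of a Cauchy determinant:
`det(C + f(x_i)g(y_j)) = det C · (1 − ∑_{k,ℓ} f(x_ℓ)B(x_ℓ)A(y_k)g(y_k)/((x_ℓ−y_k)A'(x_ℓ)B'(y_k)))`
with `A(z) = ∏ (z − x_i)`, `B(z) = ∏ (z − y_i)`. -/
theorem cauchy_rank_one_perturbation
    (n : ℕ) (x y : Fin n → ℂ) (f g : ℂ → ℂ)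
    (hx : Function.Injective x) (hy : Function.Injective y)
    (hxy : ∀ i j, x i ≠ y j) :
    Matrix.det (Matrix.of fun i j : Fin n => 1 / (x i - y j) + f (x i) * g (y j)) =
      Matrix.det (Matrix.of fun i j : Fin n => 1 / (x i - y j)) *
        (1 - ∑ k : Fin n, ∑ ℓ : Fin n,
          f (x ℓ) * (∏ i, (x ℓ - y i)) * (∏ i, (y k - x i)) * g (y k) /
            ((x ℓ - y k) * deriv (fun z => ∏ i, (z - x i)) (x ℓ) *
              deriv (fun z => ∏ i, (z - y i)) (y k))) :=
  cauchy_rank_one_perturbation' n x y f g hx hy hxy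
end

section
/- Let x_1,…,x_n, y_1,…,y_n be distinct complex numbers (x_i ≠ y_j, all distinct among themselves, none equal to −1), let C be the Cauchy matrix with C_{ij} = 1/(x_i − y_j), A(z) = ∏_i (z − x_i), B(z) = ∏_i (z − y_i). Then ∑_{k,ℓ=1}^n (−1)^{ℓ+k} det(C^{ℓ,k}) · 1/(x_ℓ + 1) = det(C) · (1 − B(−1)/A(−1)). -/
open scoped BigOperators
open Polynomial Finset

/-- The key partial-fraction / Lagrange interpolation identity. -/
lemma poly_key (n : ℕ) (x y : Fin (n+1) → ℂ) (hy : Function.Injective y)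
    (hy1 : ∀ j, y j ≠ -1) :
    (∀ t : ℂ, ∏ i, (t - x i) =
      (∏ i, ((-1:ℂ) - x i)) * (∏ i, ((-1:ℂ) - y i))⁻¹ * ∏ m, (t - y m)
      + ∑ j, (∏ i, (y j - x i)) * (y j + 1)⁻¹ *
          (∏ m ∈ Finset.univ.erase j, (y j - y m))⁻¹ *
          ((t + 1) * ∏ m ∈ Finset.univ.erase j, (t - y m)))
    ∧ ((1 : ℂ) = (∏ i, ((-1:ℂ) - x i)) * (∏ i, ((-1:ℂ) - y i))⁻¹
      + ∑ j, (∏ i, (y j - x i)) * (y j + 1)⁻¹ *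
          (∏ m ∈ Finset.univ.erase j, (y j - y m))⁻¹) := by
  classical
  have hBm1 : (∏ i, ((-1:ℂ) - y i)) ≠ 0 := by
    rw [Finset.prod_ne_zero_iff]
    intro i _
    exact sub_ne_zero.mpr (fun h => (hy1 i) h.symm)
  set Am1 := ∏ i, ((-1:ℂ) - x i) with hAm1def
  set Bm1 := ∏ i, ((-1:ℂ) - y i) with hBm1def
  set coef : Fin (n+1) → ℂ := fun j =>
    (∏ i, (y j - x i)) * (y j + 1)⁻¹ *
      (∏ m ∈ Finset.univ.erase j, (y j - y m))⁻¹ with hcoef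
  set A : ℂ[X] := ∏ i, (X - C (x i)) with hA
  set Q : ℂ[X] := C (Am1 * Bm1⁻¹) * ∏ m, (X - C (y m))
      + ∑ j, C (coef j) * ((X - C (-1)) * ∏ m ∈ Finset.univ.erase j, (X - C (y m)))
      with hQ
  -- generic facts about products of (X - C w)
  have hmon : ∀ (s : Finset (Fin (n+1))) (w : Fin (n+1) → ℂ),
      (∏ m ∈ s, (X - C (w m))).Monic ∧ (∏ m ∈ s, (X - C (w m))).natDegree = s.card := by
    intro s w
    refine ⟨monic_prod_of_monic s _ (fun i _ => monic_X_sub_C _), ?_⟩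
    rw [natDegree_prod_of_monic s _ (fun i _ => monic_X_sub_C _)]
    simp [natDegree_X_sub_C]
  have hAQ : A = Q := by
    have hinj : Set.InjOn (Fin.cases (-1) y : Fin (n+2) → ℂ) (Finset.univ : Finset (Fin (n+2))) := by
      intro a _ b _ h
      induction a using Fin.cases with
      | zero =>
        induction b using Fin.cases with
        | zero => rfl
        | succ j => simp at h; exact absurd h.symm (hy1 j)
      | succ i =>
        induction b using Fin.cases with
        | zero => simp at h; exact absurd h (hy1 i)
        | succ j => simp at h; exact congrArg Fin.succ (hy h)
    have hdegA : A.degree ≤ ((n+1:ℕ) : WithBot ℕ) := by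
      have h2 := (hmon Finset.univ x).2
      calc A.degree ≤ (A.natDegree : WithBot ℕ) := degree_le_natDegree
        _ = ((n+1 : ℕ) : WithBot ℕ) := by
            rw [hA, h2, Finset.card_univ, Fintype.card_fin]
    have hdegQ : Q.degree ≤ ((n+1:ℕ) : WithBot ℕ) := by
      rw [hQ]
      refine le_trans (degree_add_le _ _) (max_le ?_ ?_)
      · refine le_trans (degree_mul_le _ _) ?_
        have h1 : (∏ m, (X - C (y m))).degree ≤ ((n+1:ℕ) : WithBot ℕ) := by
          have h2 := (hmon Finset.univ y).2
          calc (∏ m, (X - C (y m))).degree ≤ _ := degree_le_natDegree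
            _ = ((n+1 : ℕ) : WithBot ℕ) := by rw [h2, Finset.card_univ, Fintype.card_fin]
        calc (C (Am1 * Bm1⁻¹)).degree + (∏ m, (X - C (y m))).degree
            ≤ 0 + ((n+1:ℕ) : WithBot ℕ) := add_le_add degree_C_le h1
          _ = ((n+1:ℕ) : WithBot ℕ) := zero_add _
      · refine le_trans (degree_sum_le _ _) (Finset.sup_le (fun j _ => ?_))
        refine le_trans (degree_mul_le _ _) ?_
        have h2 : ((X - C (-1:ℂ)) * ∏ m ∈ Finset.univ.erase j, (X - C (y m))).degree
            ≤ ((n+1:ℕ) : WithBot ℕ) := by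
          have hnd : ((X - C (-1:ℂ)) * ∏ m ∈ Finset.univ.erase j, (X - C (y m))).natDegree
              = n + 1 := by
            rw [(monic_X_sub_C (-1:ℂ)).natDegree_mul (hmon (Finset.univ.erase j) y).1,
              natDegree_X_sub_C, (hmon (Finset.univ.erase j) y).2,
              Finset.card_erase_of_mem (Finset.mem_univ j), Finset.card_univ, Fintype.card_fin]
            omega
          calc _ ≤ (((X - C (-1:ℂ)) * ∏ m ∈ Finset.univ.erase j, (X - C (y m))).natDegree : WithBot ℕ) := degree_le_natDegree
            _ = ((n+1:ℕ) : WithBot ℕ) := by rw [hnd]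
        calc (C (coef j)).degree + _ ≤ 0 + ((n+1:ℕ) : WithBot ℕ) := add_le_add degree_C_le h2
          _ = ((n+1:ℕ) : WithBot ℕ) := zero_add _
    have hdeg : (A - Q).degree < ((Finset.univ : Finset (Fin (n+2))).card : ℕ) := by
      have : (A - Q).degree ≤ ((n+1:ℕ) : WithBot ℕ) := le_trans (degree_sub_le _ _) (max_le hdegA hdegQ)
      refine lt_of_le_of_lt this ?_
      rw [Finset.card_univ, Fintype.card_fin]
      exact_mod_cast Nat.lt_succ_self (n+1)
    have heval : ∀ i ∈ (Finset.univ : Finset (Fin (n+2))),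
        (A - Q).eval ((Fin.cases (-1) y : Fin (n+2) → ℂ) i) = 0 := by
      intro i _
      rw [eval_sub, sub_eq_zero]
      induction i using Fin.cases with
      | zero =>
        simp only [Fin.cases_zero]
        rw [hA, hQ]
        simp only [eval_add, eval_mul, eval_C, eval_prod, eval_sub, eval_X, eval_finset_sum]
        rw [Finset.sum_eq_zero (fun j _ => by norm_num), ← hBm1def, ← hAm1def]
        field_simp
        simp
      | succ j =>
        simp only [Fin.cases_succ]
        rw [hA, hQ]
        simp only [eval_add, eval_mul, eval_C, eval_prod, eval_sub, eval_X, eval_finset_sum]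
        have h1 : ∏ m, (y j - y m) = 0 :=
          Finset.prod_eq_zero (Finset.mem_univ j) (sub_self _)
        rw [h1, mul_zero, zero_add]
        rw [Finset.sum_eq_single j ?h1 ?h2]
        · have hyj1 : y j + 1 ≠ 0 := by
            intro h; apply hy1 j; linear_combination h
          have hD : (∏ m ∈ Finset.univ.erase j, (y j - y m)) ≠ 0 := by
            rw [Finset.prod_ne_zero_iff]
            intro m hm
            exact sub_ne_zero.mpr (fun h => (Finset.mem_erase.mp hm).1 (hy h.symm))
          rw [hcoef]
          field_simp
          ring
        · intro k _ hkj
          have : ∏ m ∈ Finset.univ.erase k, (y j - y m) = 0 :=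
            Finset.prod_eq_zero (Finset.mem_erase.mpr ⟨Ne.symm hkj, Finset.mem_univ j⟩) (sub_self _)
          rw [this]
          ring
        · intro h; exact absurd (Finset.mem_univ j) h
    have h0 := Polynomial.eq_zero_of_degree_lt_of_eval_index_eq_zero _ hinj hdeg heval
    exact sub_eq_zero.mp h0
  constructor
  · intro t
    have h := congrArg (eval t) hAQ
    rw [hA, hQ] at h
    simpa only [eval_add, eval_mul, eval_C, eval_prod, eval_sub, eval_X, eval_finset_sum,
      sub_neg_eq_add, hcoef] using h
  · have hAc : A.coeff (n+1) = 1 := by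
      have hh := hmon Finset.univ x
      have h1 := hh.1.coeff_natDegree
      rwa [hh.2, Finset.card_univ, Fintype.card_fin] at h1
    have hBc : (∏ m, (X - C (y m))).coeff (n+1) = 1 := by
      have hh := hmon Finset.univ y
      have h1 := hh.1.coeff_natDegree
      rwa [hh.2, Finset.card_univ, Fintype.card_fin] at h1
    have hTc : ∀ j : Fin (n+1),
        (((X - C (-1:ℂ)) * ∏ m ∈ Finset.univ.erase j, (X - C (y m)))).coeff (n+1) = 1 := by
      intro j
      have hm := (monic_X_sub_C (-1:ℂ)).mul (hmon (Finset.univ.erase j) y).1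
      have hnd : ((X - C (-1:ℂ)) * ∏ m ∈ Finset.univ.erase j, (X - C (y m))).natDegree
          = n + 1 := by
        rw [(monic_X_sub_C (-1:ℂ)).natDegree_mul (hmon (Finset.univ.erase j) y).1,
          natDegree_X_sub_C, (hmon (Finset.univ.erase j) y).2,
          Finset.card_erase_of_mem (Finset.mem_univ j), Finset.card_univ, Fintype.card_fin]
        omega
      have hcn := hm.coeff_natDegree
      rwa [hnd] at hcn
    have key : (1:ℂ) = Am1 * Bm1⁻¹ + ∑ j, coef j := by
      calc (1:ℂ) = A.coeff (n+1) := hAc.symm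
        _ = Q.coeff (n+1) := by rw [hAQ]
        _ = Am1 * Bm1⁻¹ + ∑ j, coef j := by
            rw [hQ, coeff_add, coeff_C_mul, hBc, mul_one, finset_sum_coeff]
            congr 1
            exact Finset.sum_congr rfl (fun j _ => by rw [coeff_C_mul, hTc j, mul_one])
    simpa [hcoef] using key

/-- Signed sum of Cauchy minors weighted by `1/(x_ℓ+1)`:
`∑_{k,ℓ} (−1)^{ℓ+k} det(C^{ℓ,k}) /(x_ℓ+1) = det C · (1 − B(−1)/A(−1))`. -/
theorem cauchy_minor_weighted_sum (n : ℕ) (x y : Fin (n + 1) → ℂ)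
    (hx : Function.Injective x) (hy : Function.Injective y)
    (hxy : ∀ i j, x i ≠ y j)
    (hx1 : ∀ i, x i ≠ -1) (hy1 : ∀ j, y j ≠ -1) :
    ∑ k : Fin (n + 1), ∑ ℓ : Fin (n + 1),
      (-1 : ℂ) ^ ((ℓ : ℕ) + (k : ℕ)) *
        Matrix.det ((Matrix.of fun i j : Fin (n + 1) => 1 / (x i - y j)).submatrix
          ℓ.succAbove k.succAbove) * (1 / (x ℓ + 1)) =
    Matrix.det (Matrix.of fun i j : Fin (n + 1) => 1 / (x i - y j)) *
      (1 - (∏ i, ((-1 : ℂ) - y i)) / (∏ i, ((-1 : ℂ) - x i))) := by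
  classical
  obtain ⟨hev, hco⟩ := poly_key n x y hy hy1
  set Cm : Matrix (Fin (n+1)) (Fin (n+1)) ℂ :=
    Matrix.of fun i j : Fin (n + 1) => 1 / (x i - y j) with hCm
  set Am1 := ∏ i, ((-1:ℂ) - x i) with hAm1def
  set Bm1 := ∏ i, ((-1:ℂ) - y i) with hBm1def
  have hAm1 : Am1 ≠ 0 := by
    rw [hAm1def, Finset.prod_ne_zero_iff]
    exact fun i _ => sub_ne_zero.mpr (fun h => (hx1 i) h.symm)
  have hBm1 : Bm1 ≠ 0 := by
    rw [hBm1def, Finset.prod_ne_zero_iff]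
    exact fun i _ => sub_ne_zero.mpr (fun h => (hy1 i) h.symm)
  have hx1' : ∀ i, x i + 1 ≠ 0 := fun i h => hx1 i (by linear_combination h)
  have hy1' : ∀ j, y j + 1 ≠ 0 := fun j h => hy1 j (by linear_combination h)
  have hxyne : ∀ i j, x i - y j ≠ 0 := fun i j => sub_ne_zero.mpr (hxy i j)
  have hD : ∀ j, (∏ m ∈ Finset.univ.erase j, (y j - y m)) ≠ 0 := by
    intro j
    rw [Finset.prod_ne_zero_iff]
    intro m hm
    exact sub_ne_zero.mpr (fun h => (Finset.mem_erase.mp hm).1 (hy h.symm))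
  set c : Fin (n+1) → ℂ := fun j => -Bm1 * Am1⁻¹ *
    ((∏ i, (y j - x i)) * (y j + 1)⁻¹ * (∏ m ∈ Finset.univ.erase j, (y j - y m))⁻¹) with hc
  set u : Fin (n+1) → ℂ := fun ℓ => 1 / (x ℓ + 1) with hu
  -- c solves the linear system
  have hmv : Cm.mulVec c = u := by
    funext i
    have hP : (∏ m, (x i - y m)) ≠ 0 := by
      rw [Finset.prod_ne_zero_iff]; exact fun m _ => hxyne i m
    have h0 := hev (x i)
    have hz : ∏ m, (x i - x m) = 0 :=
      Finset.prod_eq_zero (f := fun m => x i - x m) (Finset.mem_univ i) (sub_self (x i))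
    rw [hz] at h0
    -- h0 : 0 = Am1 * Bm1⁻¹ * P + S
    have hS : ∑ j, (∏ i', (y j - x i')) * (y j + 1)⁻¹ *
          (∏ m ∈ Finset.univ.erase j, (y j - y m))⁻¹ *
          ((x i + 1) * ∏ m ∈ Finset.univ.erase j, (x i - y m))
        = -(Am1 * Bm1⁻¹ * ∏ m, (x i - y m)) := by linear_combination -h0
    have hterm : ∀ j : Fin (n+1), Cm i j * c j =
        (-Bm1 * Am1⁻¹ * (x i + 1)⁻¹ * (∏ m, (x i - y m))⁻¹) *
          ((∏ i', (y j - x i')) * (y j + 1)⁻¹ *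
            (∏ m ∈ Finset.univ.erase j, (y j - y m))⁻¹ *
            ((x i + 1) * ∏ m ∈ Finset.univ.erase j, (x i - y m))) := by
      intro j
      have hsplit : (∏ m, (x i - y m)) =
          (x i - y j) * ∏ m ∈ Finset.univ.erase j, (x i - y m) :=
        (Finset.mul_prod_erase _ _ (Finset.mem_univ j)).symm
      have hpj : (∏ m ∈ Finset.univ.erase j, (x i - y m)) ≠ 0 := by
        rw [Finset.prod_ne_zero_iff]; exact fun m _ => hxyne i m
      have h1 := hxyne i j
      have h2 := hy1' j
      have h3 := hD j
      have h4 := hx1' i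
      rw [hc, hCm, hsplit]
      simp only [Matrix.of_apply]
      field_simp
    have : (Cm.mulVec c) i = ∑ j, Cm i j * c j := by
      simp [Matrix.mulVec, dotProduct]
    rw [this, Finset.sum_congr rfl (fun j _ => hterm j), ← Finset.mul_sum, hS, hu]
    have h4 := hx1' i
    field_simp
  -- sum of the c's
  have hsumc : ∑ k, c k = 1 - Bm1 / Am1 := by
    have hS0 : ∑ j, (∏ i', (y j - x i')) * (y j + 1)⁻¹ *
        (∏ m ∈ Finset.univ.erase j, (y j - y m))⁻¹ = 1 - Am1 * Bm1⁻¹ := by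
      linear_combination -hco
    rw [hc]
    simp only
    rw [← Finset.mul_sum, hS0]
    field_simp
    ring
  -- cofactor expansion: inner sums are Cramer determinants
  have hcramer : Matrix.cramer Cm u = Cm.det • c := by
    rw [← hmv, Matrix.cramer_eq_adjugate_mulVec, Matrix.mulVec_mulVec, Matrix.adjugate_mul,
      Matrix.smul_mulVec, Matrix.one_mulVec]
  have step : ∀ k : Fin (n+1), ∑ ℓ : Fin (n + 1),
      (-1 : ℂ) ^ ((ℓ : ℕ) + (k : ℕ)) *
        Matrix.det (Cm.submatrix ℓ.succAbove k.succAbove) * (1 / (x ℓ + 1))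
      = Cm.det * c k := by
    intro k
    have hdet : (Cm.updateCol k u).det = ∑ ℓ : Fin (n+1),
        (-1 : ℂ) ^ ((ℓ : ℕ) + (k : ℕ)) *
          Matrix.det (Cm.submatrix ℓ.succAbove k.succAbove) * (1 / (x ℓ + 1)) := by
      rw [Matrix.det_succ_column (Cm.updateCol k u) k]
      refine Finset.sum_congr rfl (fun ℓ _ => ?_)
      rw [Matrix.updateCol_self, Matrix.submatrix_updateCol_succAbove]
      rw [hu]
      ring
    rw [← hdet, ← Matrix.cramer_apply, hcramer]
    simp [mul_comm]
  rw [Finset.sum_congr rfl (fun k _ => step k), ← Finset.mul_sum, hsumc]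
end

section
/- Let x_1,…,x_n, y_1,…,y_n be pairwise distinct complex numbers with x_i ≠ y_j, all nonzero, and none equal to −1 or −1/p for a fixed 0 < p < 1. With A(z) = ∏_i (z − x_i) and B(z) = ∏_i (z − y_i), the double sum ∑_{k,ℓ=1}^n [x_ℓ/((1+x_ℓ)(1+p x_ℓ))] · [B(x_ℓ)A(y_k)/((x_ℓ−y_k)A'(x_ℓ)B'(y_k))] · [(1+p y_k)/y_k] equals −(1/(1−p)) · [ (A(0)/B(0) − 1)·B(−1/p)/A(−1/p) + (p − A(0)/B(0))·B(−1)/A(−1) + 1 − p ]. -/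
open scoped BigOperators

section ResidueAux
open Polynomial Finset


lemma basis_coeff (s : Finset ℂ) (r : ℂ) (hr : r ∈ s) :
    (Lagrange.basis s id r).coeff (s.card - 1) = (∏ r' ∈ s.erase r, (r - r'))⁻¹ := by
  have hinj : Set.InjOn id (s : Set ℂ) := fun _ _ _ _ h => h
  have hnd := Lagrange.natDegree_basis hinj hr
  rw [← hnd, ← Polynomial.leadingCoeff]
  unfold Lagrange.basis Lagrange.basisDivisor
  rw [leadingCoeff_prod, ← Finset.prod_inv_distrib]
  refine Finset.prod_congr rfl fun j hj => ?_
  rw [leadingCoeff_mul, leadingCoeff_C, (monic_X_sub_C (id j)).leadingCoeff, mul_one]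
  rfl

lemma lag_sum (s : Finset ℂ) (P : ℂ[X]) (hP : P.degree < s.card) :
    ∑ r ∈ s, P.eval r / ∏ r' ∈ s.erase r, (r - r') = P.coeff (s.card - 1) := by
  have hinj : Set.InjOn id (s : Set ℂ) := fun _ _ _ _ h => h
  conv_rhs => rw [Lagrange.eq_interpolate hinj hP]
  rw [Lagrange.interpolate_apply, finset_sum_coeff]
  refine Finset.sum_congr rfl fun r hr => ?_
  rw [coeff_C_mul, basis_coeff s r hr, div_eq_mul_inv]
  rfl
lemma three_sum (m : ℕ) (w : Fin m → ℂ) (hw : Function.Injective w) (a b : ℂ)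
    (hab : a ≠ b) (ha : ∀ i, w i ≠ a) (hb : ∀ i, w i ≠ b)
    (P : ℂ[X]) (hP : P.degree < ((m + 2 : ℕ) : WithBot ℕ)) :
    P.eval a / ((a - b) * ∏ i, (a - w i)) + P.eval b / ((b - a) * ∏ i, (b - w i))
      + ∑ ℓ, P.eval (w ℓ) / ((w ℓ - a) * ((w ℓ - b) * ∏ i ∈ Finset.univ.erase ℓ, (w ℓ - w i)))
      = P.coeff (m + 1) := by
  classical
  set T : Finset ℂ := Finset.image w Finset.univ with hT
  have haT : a ∉ T := by
    simp only [hT, mem_image, not_exists]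
    rintro i ⟨-, h⟩; exact ha i h
  have hbT : b ∉ T := by
    simp only [hT, mem_image, not_exists]
    rintro i ⟨-, h⟩; exact hb i h
  have haB : a ∉ insert b T := by
    simp only [mem_insert]; rintro (h | h); exacts [hab h, haT h]
  set s : Finset ℂ := insert a (insert b T) with hs
  have hcard : s.card = m + 2 := by
    rw [hs, card_insert_of_notMem haB, card_insert_of_notMem hbT,
      card_image_of_injective _ hw, card_univ, Fintype.card_fin]
  have key := lag_sum s P (by rw [hcard]; exact hP)
  rw [hcard] at key
  have h21 : m + 2 - 1 = m + 1 := rfl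
  rw [h21] at key
  have e1 : s.erase a = insert b T := erase_insert haB
  have e2 : s.erase b = insert a T := by
    rw [hs, Finset.erase_insert_of_ne hab, erase_insert hbT]
  have himg : ∀ c : ℂ, ∏ r' ∈ T, (c - r') = ∏ i, (c - w i) := fun c =>
    Finset.prod_image (fun i _ j _ h => hw h)
  rw [← key, hs, Finset.sum_insert haB, Finset.sum_insert hbT,
    Finset.sum_image (fun i _ j _ h => hw h), ← hs, e1, e2,
    Finset.prod_insert hbT, Finset.prod_insert haT, himg a, himg b, ← add_assoc]
  congr 1
  refine Finset.sum_congr rfl fun ℓ _ => ?_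
  have hwa : (w ℓ : ℂ) ≠ a := ha ℓ
  have hwb : (w ℓ : ℂ) ≠ b := hb ℓ
  have e3 : s.erase (w ℓ) = insert a (insert b (T.erase (w ℓ))) := by
    rw [hs, Finset.erase_insert_of_ne hwa.symm, Finset.erase_insert_of_ne hwb.symm]
  rw [e3, Finset.prod_insert, Finset.prod_insert, ← Finset.image_erase hw,
    Finset.prod_image (fun i _ j _ h => hw h)]
  · exact fun h => hbT (Finset.erase_subset _ _ h)
  · simp only [mem_insert]
    rintro (h | h)
    exacts [hab h, haT (Finset.erase_subset _ _ h)]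
lemma deriv_prod_eq (m : ℕ) (w : Fin m → ℂ) (ℓ : Fin m) :
    deriv (fun z : ℂ => ∏ i, (z - w i)) (w ℓ) = ∏ i ∈ Finset.univ.erase ℓ, (w ℓ - w i) := by
  have hfe : (fun z : ℂ => ∏ i, (z - w i))
      = fun z : ℂ => (z - w ℓ) * ∏ i ∈ Finset.univ.erase ℓ, (z - w i) := by
    funext z
    rw [← Finset.mul_prod_erase Finset.univ (fun i => z - w i) (Finset.mem_univ ℓ)]
  rw [hfe]
  have h1 : DifferentiableAt ℂ (fun z : ℂ => z - w ℓ) (w ℓ) := by fun_prop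
  have h2 : DifferentiableAt ℂ (fun z : ℂ => ∏ i ∈ Finset.univ.erase ℓ, (z - w i)) (w ℓ) := by
    apply DifferentiableAt.fun_finsetProd
    intro i _
    fun_prop
  rw [deriv_fun_mul h1 h2]
  simp
lemma neg_one_ne (p : ℝ) (hp : 0 < p) (hp1 : p < 1) : (-1 : ℂ) ≠ -1 / (p : ℂ) := by
  have hp0 : (p : ℂ) ≠ 0 := by exact_mod_cast hp.ne'
  intro h
  rw [eq_comm, div_eq_iff hp0] at h
  have : (p : ℂ) = 1 := by linear_combination h
  exact (by exact_mod_cast hp1.ne : (p : ℂ) ≠ 1) this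

lemma inner_id (n : ℕ) (p : ℝ) (hp : 0 < p) (hp1 : p < 1)
    (x y : Fin n → ℂ) (hx : Function.Injective x)
    (hx1 : ∀ i, x i ≠ -1) (hxp : ∀ i, x i ≠ -1 / (p : ℂ)) (k : Fin n) :
    ((-1 : ℂ) * ∏ i ∈ Finset.univ.erase k, ((-1 : ℂ) - y i)) /
        (((-1 : ℂ) - (-1 / (p : ℂ))) * ∏ i, ((-1 : ℂ) - x i))
      + ((-1 / (p : ℂ)) * ∏ i ∈ Finset.univ.erase k, ((-1 / (p : ℂ)) - y i)) /
        (((-1 / (p : ℂ)) - (-1)) * ∏ i, ((-1 / (p : ℂ)) - x i))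
      + ∑ ℓ, (x ℓ * ∏ i ∈ Finset.univ.erase k, (x ℓ - y i)) /
          ((x ℓ - (-1)) * ((x ℓ - (-1 / (p : ℂ))) * ∏ i ∈ Finset.univ.erase ℓ, (x ℓ - x i)))
      = 0 := by
  classical
  have hn : 0 < n := k.pos
  have hab : (-1 : ℂ) ≠ -1 / (p : ℂ) := neg_one_ne p hp hp1
  set P : ℂ[X] := X * ∏ i ∈ Finset.univ.erase k, (X - C (y i)) with hP
  have hQm : (∏ i ∈ Finset.univ.erase k, (X - C (y i)) : ℂ[X]).Monic :=
    monic_prod_of_monic _ _ fun i _ => monic_X_sub_C _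
  have hPm : P.Monic := monic_X.mul hQm
  have hnd : P.natDegree = n := by
    rw [hP, monic_X.natDegree_mul hQm, natDegree_X,
      natDegree_prod _ _ (fun i _ => X_sub_C_ne_zero (y i))]
    simp only [natDegree_X_sub_C, Finset.sum_const, smul_eq_mul, mul_one,
      Finset.card_erase_of_mem (Finset.mem_univ k), Finset.card_univ, Fintype.card_fin]
    omega
  have hdeg : P.degree < ((n + 2 : ℕ) : WithBot ℕ) := by
    rw [degree_eq_natDegree hPm.ne_zero, hnd]
    exact_mod_cast by omega
  have hcoeff : P.coeff (n + 1) = 0 :=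
    coeff_eq_zero_of_degree_lt (by rw [degree_eq_natDegree hPm.ne_zero, hnd]; exact_mod_cast by omega)
  have heval : ∀ c : ℂ, P.eval c = c * ∏ i ∈ Finset.univ.erase k, (c - y i) := by
    intro c; simp [hP, eval_prod]
  have h3 := three_sum n x hx (-1) (-1 / (p : ℂ)) hab hx1 hxp P hdeg
  rw [hcoeff] at h3
  simp only [heval] at h3
  exact h3
lemma outer_id (n : ℕ) (p : ℝ) (hp : 0 < p)
    (x y : Fin n → ℂ) (hy : Function.Injective y)
    (d : ℂ) (hd0 : d ≠ 0) (hy0 : ∀ i, y i ≠ 0) (hyd : ∀ i, y i ≠ d) :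
    ((p : ℂ) * (((0 : ℂ) - (-1 / (p : ℂ))) * ∏ i, ((0 : ℂ) - x i))) /
        (((0 : ℂ) - d) * ∏ i, ((0 : ℂ) - y i))
      + ((p : ℂ) * ((d - (-1 / (p : ℂ))) * ∏ i, (d - x i))) /
        ((d - 0) * ∏ i, (d - y i))
      + ∑ k, ((p : ℂ) * ((y k - (-1 / (p : ℂ))) * ∏ i, (y k - x i))) /
          ((y k - 0) * ((y k - d) * ∏ i ∈ Finset.univ.erase k, (y k - y i)))
      = (p : ℂ) := by
  classical
  have hp0 : (p : ℂ) ≠ 0 := by exact_mod_cast hp.ne'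
  set Q : ℂ[X] := (X - C (-1 / (p : ℂ))) * ∏ i, (X - C (x i)) with hQ
  set P : ℂ[X] := C (p : ℂ) * Q with hP
  have hQm : Q.Monic := (monic_X_sub_C _).mul
    (monic_prod_of_monic _ _ fun i _ => monic_X_sub_C _)
  have hnd : Q.natDegree = n + 1 := by
    rw [hQ, (monic_X_sub_C _).natDegree_mul
      (monic_prod_of_monic _ _ fun i _ => monic_X_sub_C _), natDegree_X_sub_C,
      natDegree_prod _ _ (fun i _ => X_sub_C_ne_zero (x i))]
    simp [add_comm]
  have hdeg : P.degree < ((n + 2 : ℕ) : WithBot ℕ) := by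
    calc P.degree ≤ (C (p : ℂ)).degree + Q.degree := degree_mul_le _ _
    _ ≤ 0 + Q.degree := add_le_add degree_C_le le_rfl
    _ = Q.degree := zero_add _
    _ < _ := by rw [degree_eq_natDegree hQm.ne_zero, hnd]; exact_mod_cast by omega
  have hcoeff : P.coeff (n + 1) = (p : ℂ) := by
    rw [hP, coeff_C_mul, ← hnd, hQm.coeff_natDegree, mul_one]
  have heval : ∀ c : ℂ, P.eval c = (p : ℂ) * ((c - (-1 / (p : ℂ))) * ∏ i, (c - x i)) := by
    intro c; simp [hP, hQ, eval_prod]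
  have h3 := three_sum n y hy 0 d (Ne.symm hd0) hy0 hyd P hdeg
  rw [hcoeff] at h3
  simp only [heval] at h3
  exact h3
lemma final_alg (p u A0 B0 A1 B1 Ap Bp : ℂ) (hp0 : p ≠ 0) (hu : u ≠ 0)
    (hB0 : B0 ≠ 0) (hA1 : A1 ≠ 0) (hB1 : B1 ≠ 0) (hAp : Ap ≠ 0) :
    (-B1 / (u * A1)) * (p - A0 / B0 + u * A1 / B1)
      + (Bp / (p * u * Ap)) * (p - p * A0 / B0)
    = -(1 / u) * ((A0 / B0 - 1) * Bp / Ap + (p - A0 / B0) * B1 / A1 + u) := by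
  have h1 : p - A0 / B0 + u * A1 / B1 = (p * B0 * B1 - A0 * B1 + u * A1 * B0) / (B0 * B1) := by
    field_simp
  have h2 : p - p * A0 / B0 = (p * B0 - p * A0) / B0 := by
    field_simp
  have h3 : (A0 / B0 - 1) * Bp / Ap + (p - A0 / B0) * B1 / A1 + u
      = ((A0 - B0) * Bp * A1 + (p * B0 - A0) * B1 * Ap + u * B0 * Ap * A1) / (B0 * Ap * A1) := by
    field_simp
  rw [h1, h2, h3, div_mul_div_comm, div_mul_div_comm, ← neg_div u 1, div_mul_div_comm,
    div_add_div _ _ (mul_ne_zero (mul_ne_zero hu hA1) (mul_ne_zero hB0 hB1))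
      (mul_ne_zero (mul_ne_zero (mul_ne_zero hp0 hu) hAp) hB0),
    div_eq_div_iff
      (mul_ne_zero (mul_ne_zero (mul_ne_zero hu hA1) (mul_ne_zero hB0 hB1))
        (mul_ne_zero (mul_ne_zero (mul_ne_zero hp0 hu) hAp) hB0))
      (mul_ne_zero hu (mul_ne_zero (mul_ne_zero hB0 hAp) hA1))]
  ring

set_option maxHeartbeats 1000000 in
/-- Residue evaluation of the double sum
`∑_{k,ℓ} [x_ℓ/((1+x_ℓ)(1+px_ℓ))]·[B(x_ℓ)A(y_k)/((x_ℓ−y_k)A'(x_ℓ)B'(y_k))]·[(1+py_k)/y_k]`,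
with `A(z)=∏(z−x_i)`, `B(z)=∏(z−y_i)`. -/
theorem residue_double_sum (n : ℕ) (p : ℝ) (hp : 0 < p) (hp1 : p < 1)
    (x y : Fin n → ℂ)
    (hx : Function.Injective x) (hy : Function.Injective y)
    (hxy : ∀ i j, x i ≠ y j)
    (hx0 : ∀ i, x i ≠ 0) (hy0 : ∀ i, y i ≠ 0)
    (hx1 : ∀ i, x i ≠ -1) (hy1 : ∀ i, y i ≠ -1)
    (hxp : ∀ i, x i ≠ -1 / (p : ℂ)) (hyp : ∀ i, y i ≠ -1 / (p : ℂ)) :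
    ∑ k : Fin n, ∑ ℓ : Fin n,
      (x ℓ / ((1 + x ℓ) * (1 + (p : ℂ) * x ℓ))) *
        ((∏ i, (x ℓ - y i)) * (∏ i, (y k - x i)) /
          ((x ℓ - y k) * deriv (fun z => ∏ i, (z - x i)) (x ℓ) *
            deriv (fun z => ∏ i, (z - y i)) (y k))) *
        ((1 + (p : ℂ) * y k) / y k) =
    -(1 / (1 - (p : ℂ))) *
      (((∏ i, ((0 : ℂ) - x i)) / (∏ i, ((0 : ℂ) - y i)) - 1) *
          (∏ i, (-1 / (p : ℂ) - y i)) / (∏ i, (-1 / (p : ℂ) - x i)) +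
        ((p : ℂ) - (∏ i, ((0 : ℂ) - x i)) / (∏ i, ((0 : ℂ) - y i))) *
          (∏ i, ((-1 : ℂ) - y i)) / (∏ i, ((-1 : ℂ) - x i)) +
        1 - (p : ℂ)) := by
  classical
  have hp0 : (p : ℂ) ≠ 0 := by exact_mod_cast hp.ne'
  have hb0 : (-1 / (p : ℂ)) ≠ 0 := div_ne_zero (neg_ne_zero.mpr one_ne_zero) hp0
  have hab : (-1 : ℂ) ≠ -1 / (p : ℂ) := neg_one_ne p hp hp1
  have h1p : (1 : ℂ) - (p : ℂ) ≠ 0 := sub_ne_zero.mpr (by exact_mod_cast hp1.ne')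
  have hpb : (p : ℂ) * (-1 / (p : ℂ)) = -1 := by field_simp
  have hA1 : (∏ i, ((-1 : ℂ) - x i)) ≠ 0 :=
    Finset.prod_ne_zero_iff.mpr fun i _ => sub_ne_zero.mpr (Ne.symm (hx1 i))
  have hAp : (∏ i, ((-1 / (p : ℂ)) - x i)) ≠ 0 :=
    Finset.prod_ne_zero_iff.mpr fun i _ => sub_ne_zero.mpr (Ne.symm (hxp i))
  have hB1 : (∏ i, ((-1 : ℂ) - y i)) ≠ 0 :=
    Finset.prod_ne_zero_iff.mpr fun i _ => sub_ne_zero.mpr (Ne.symm (hy1 i))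
  have hBp : (∏ i, ((-1 / (p : ℂ)) - y i)) ≠ 0 :=
    Finset.prod_ne_zero_iff.mpr fun i _ => sub_ne_zero.mpr (Ne.symm (hyp i))
  have hA0 : (∏ i, ((0 : ℂ) - x i)) ≠ 0 :=
    Finset.prod_ne_zero_iff.mpr fun i _ => sub_ne_zero.mpr (Ne.symm (hx0 i))
  have hB0 : (∏ i, ((0 : ℂ) - y i)) ≠ 0 :=
    Finset.prod_ne_zero_iff.mpr fun i _ => sub_ne_zero.mpr (Ne.symm (hy0 i))
  have hDy : ∀ k : Fin n, (∏ i ∈ Finset.univ.erase k, (y k - y i)) ≠ 0 := fun k =>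
    Finset.prod_ne_zero_iff.mpr fun i hi =>
      sub_ne_zero.mpr fun h => (Finset.mem_erase.mp hi).1 (hy h).symm
  have hDx : ∀ ℓ : Fin n, (∏ i ∈ Finset.univ.erase ℓ, (x ℓ - x i)) ≠ 0 := fun ℓ =>
    Finset.prod_ne_zero_iff.mpr fun i hi =>
      sub_ne_zero.mpr fun h => (Finset.mem_erase.mp hi).1 (hx h).symm
  have h1b : ((-1 : ℂ) - (-1 / (p : ℂ))) ≠ 0 := sub_ne_zero.mpr hab
  have hb1 : ((-1 / (p : ℂ)) - (-1 : ℂ)) ≠ 0 := sub_ne_zero.mpr hab.symm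
  have hmain : ∀ k : Fin n, ∑ ℓ : Fin n,
      (x ℓ / ((1 + x ℓ) * (1 + (p : ℂ) * x ℓ))) *
        ((∏ i, (x ℓ - y i)) * (∏ i, (y k - x i)) /
          ((x ℓ - y k) * deriv (fun z => ∏ i, (z - x i)) (x ℓ) *
            deriv (fun z => ∏ i, (z - y i)) (y k))) *
        ((1 + (p : ℂ) * y k) / y k) =
      (-(∏ i, ((-1 : ℂ) - y i)) / ((p : ℂ) * (((-1 : ℂ) - (-1 / (p : ℂ))) * ∏ i, ((-1 : ℂ) - x i)))) *
        (((p : ℂ) * ((y k - (-1 / (p : ℂ))) * ∏ i, (y k - x i))) /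
          ((y k - 0) * ((y k - (-1 : ℂ)) * ∏ i ∈ Finset.univ.erase k, (y k - y i)))) +
      ((-1 / (p : ℂ)) * (∏ i, ((-1 / (p : ℂ)) - y i)) / ((p : ℂ) * (((-1 / (p : ℂ)) - (-1)) * ∏ i, ((-1 / (p : ℂ)) - x i)))) *
        (((p : ℂ) * ((y k - (-1 / (p : ℂ))) * ∏ i, (y k - x i))) /
          ((y k - 0) * ((y k - (-1 / (p : ℂ))) * ∏ i ∈ Finset.univ.erase k, (y k - y i)))) := by
    intro k
    have hin := inner_id n p hp hp1 x y hx hx1 hxp k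
    have hyk0 := hy0 k
    have hyk1 : y k - (-1 : ℂ) ≠ 0 := sub_ne_zero.mpr (hy1 k)
    have hykb : y k - (-1 / (p : ℂ)) ≠ 0 := sub_ne_zero.mpr (hyp k)
    have hstep : ∑ ℓ : Fin n,
        (x ℓ / ((1 + x ℓ) * (1 + (p : ℂ) * x ℓ))) *
          ((∏ i, (x ℓ - y i)) * (∏ i, (y k - x i)) /
            ((x ℓ - y k) * deriv (fun z => ∏ i, (z - x i)) (x ℓ) *
              deriv (fun z => ∏ i, (z - y i)) (y k))) *
          ((1 + (p : ℂ) * y k) / y k) =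
        ((∏ i, (y k - x i)) * (1 + (p : ℂ) * y k) /
            ((p : ℂ) * (∏ i ∈ Finset.univ.erase k, (y k - y i)) * y k)) *
          ∑ ℓ, (x ℓ * ∏ i ∈ Finset.univ.erase k, (x ℓ - y i)) /
            ((x ℓ - (-1)) * ((x ℓ - (-1 / (p : ℂ))) * ∏ i ∈ Finset.univ.erase ℓ, (x ℓ - x i))) := by
      rw [Finset.mul_sum]
      refine Finset.sum_congr rfl fun ℓ _ => ?_
      rw [deriv_prod_eq n x ℓ, deriv_prod_eq n y k]
      have hxyk : x ℓ - y k ≠ 0 := sub_ne_zero.mpr (hxy ℓ k)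
      have h1x : (1 : ℂ) + x ℓ ≠ 0 := fun h => hx1 ℓ (by linear_combination h)
      have hxb : x ℓ - (-1 / (p : ℂ)) ≠ 0 := sub_ne_zero.mpr (hxp ℓ)
      have hpx : (1 : ℂ) + (p : ℂ) * x ℓ = (p : ℂ) * (x ℓ - (-1 / (p : ℂ))) := by
        field_simp
        ring
      have hexp : (∏ i, (x ℓ - y i)) =
          (x ℓ - y k) * ∏ i ∈ Finset.univ.erase k, (x ℓ - y i) :=
        (Finset.mul_prod_erase Finset.univ (fun i => x ℓ - y i) (Finset.mem_univ k)).symm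
      rw [hexp, hpx]
      set E := ∏ i ∈ Finset.univ.erase k, (x ℓ - y i) with hE
      set G := ∏ i, (y k - x i) with hG
      set Dx' := ∏ i ∈ Finset.univ.erase ℓ, (x ℓ - x i) with hDxl
      set Dy' := ∏ i ∈ Finset.univ.erase k, (y k - y i) with hDyk
      have hDx' : Dx' ≠ 0 := hDx ℓ
      have hDy' : Dy' ≠ 0 := hDy k
      rw [div_mul_div_comm, div_mul_div_comm, div_mul_div_comm,
        div_eq_div_iff
          (mul_ne_zero (mul_ne_zero (mul_ne_zero h1x (mul_ne_zero hp0 hxb))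
            (mul_ne_zero (mul_ne_zero hxyk hDx') hDy')) hyk0)
          (mul_ne_zero (mul_ne_zero (mul_ne_zero hp0 hDy') hyk0)
            (mul_ne_zero (sub_ne_zero.mpr fun h => hx1 ℓ (by linear_combination h))
              (mul_ne_zero hxb hDx')))]
      ring
    rw [hstep, show (∑ ℓ, (x ℓ * ∏ i ∈ Finset.univ.erase k, (x ℓ - y i)) /
        ((x ℓ - (-1)) * ((x ℓ - (-1 / (p : ℂ))) * ∏ i ∈ Finset.univ.erase ℓ, (x ℓ - x i)))) =
      -(((-1 : ℂ) * ∏ i ∈ Finset.univ.erase k, ((-1 : ℂ) - y i)) /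
          (((-1 : ℂ) - (-1 / (p : ℂ))) * ∏ i, ((-1 : ℂ) - x i)))
      - ((-1 / (p : ℂ)) * ∏ i ∈ Finset.univ.erase k, ((-1 / (p : ℂ)) - y i)) /
          (((-1 / (p : ℂ)) - (-1)) * ∏ i, ((-1 / (p : ℂ)) - x i)) from by linear_combination hin]
    have hB1k : (∏ i, ((-1 : ℂ) - y i)) =
        ((-1 : ℂ) - y k) * ∏ i ∈ Finset.univ.erase k, ((-1 : ℂ) - y i) :=
      (Finset.mul_prod_erase Finset.univ (fun i => (-1 : ℂ) - y i) (Finset.mem_univ k)).symm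
    have hBpk : (∏ i, ((-1 / (p : ℂ)) - y i)) =
        ((-1 / (p : ℂ)) - y k) * ∏ i ∈ Finset.univ.erase k, ((-1 / (p : ℂ)) - y i) :=
      (Finset.mul_prod_erase Finset.univ (fun i => (-1 / (p : ℂ)) - y i) (Finset.mem_univ k)).symm
    rw [hB1k, hBpk]
    set E1 := ∏ i ∈ Finset.univ.erase k, ((-1 : ℂ) - y i) with hE1
    set Ep := ∏ i ∈ Finset.univ.erase k, ((-1 / (p : ℂ)) - y i) with hEp
    set G := ∏ i, (y k - x i) with hG
    set A1' := ∏ i, ((-1 : ℂ) - x i) with hA1'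
    set Ap' := ∏ i, ((-1 / (p : ℂ)) - x i) with hAp'
    set Dy' := ∏ i ∈ Finset.univ.erase k, (y k - y i) with hDy'
    have hDy'' : Dy' ≠ 0 := hDy k
    have hpy : (1 : ℂ) + (p : ℂ) * y k = (p : ℂ) * (y k - (-1 / (p : ℂ))) := by
      field_simp
      ring
    rw [hpy]
    have e1 : (G * ((p : ℂ) * (y k - (-1 / (p : ℂ)))) / ((p : ℂ) * Dy' * y k)) *
        (-(((-1 : ℂ) * E1) / (((-1 : ℂ) - (-1 / (p : ℂ))) * A1'))) =
        (-(((-1 : ℂ) - y k) * E1) / ((p : ℂ) * (((-1 : ℂ) - (-1 / (p : ℂ))) * A1'))) *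
        (((p : ℂ) * ((y k - (-1 / (p : ℂ))) * G)) /
          ((y k - 0) * ((y k - (-1 : ℂ)) * Dy'))) := by
      rw [div_mul_div_comm, mul_neg, div_mul_div_comm, ← neg_div,
        div_eq_div_iff
          (mul_ne_zero (mul_ne_zero (mul_ne_zero hp0 hDy'') hyk0) (mul_ne_zero h1b hA1))
          (mul_ne_zero (mul_ne_zero hp0 (mul_ne_zero h1b hA1))
            (mul_ne_zero (by simpa using hyk0) (mul_ne_zero hyk1 hDy'')))]
      ring
    have e2 : (G * ((p : ℂ) * (y k - (-1 / (p : ℂ)))) / ((p : ℂ) * Dy' * y k)) *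
        (-(((-1 / (p : ℂ)) * Ep) / ((((-1 / (p : ℂ)) - (-1)) * Ap')))) =
        ((-1 / (p : ℂ)) * ((((-1 / (p : ℂ)) - y k)) * Ep) /
          ((p : ℂ) * ((((-1 / (p : ℂ)) - (-1)) * Ap')))) *
        (((p : ℂ) * ((y k - (-1 / (p : ℂ))) * G)) /
          ((y k - 0) * ((y k - (-1 / (p : ℂ))) * Dy'))) := by
      rw [div_mul_div_comm, mul_neg, div_mul_div_comm, ← neg_div,
        div_eq_div_iff
          (mul_ne_zero (mul_ne_zero (mul_ne_zero hp0 hDy'') hyk0) (mul_ne_zero hb1 hAp))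
          (mul_ne_zero (mul_ne_zero hp0 (mul_ne_zero hb1 hAp))
            (mul_ne_zero (by simpa using hyk0) (mul_ne_zero hykb hDy'')))]
      ring
    linear_combination e1 + e2
  rw [Finset.sum_congr rfl fun k _ => hmain k, Finset.sum_add_distrib,
    ← Finset.mul_sum, ← Finset.mul_sum]
  have ho1 := outer_id n p hp x y hy (-1) (neg_ne_zero.mpr one_ne_zero) hy0 hy1
  have hob := outer_id n p hp x y hy (-1 / (p : ℂ)) hb0 hy0 hyp
  set A0 := ∏ i, ((0 : ℂ) - x i) with hA0'
  set B0 := ∏ i, ((0 : ℂ) - y i) with hB0'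
  set A1' := ∏ i, ((-1 : ℂ) - x i) with hA1'
  set B1' := ∏ i, ((-1 : ℂ) - y i) with hB1'
  set Ap' := ∏ i, ((-1 / (p : ℂ)) - x i) with hAp'
  set Bp' := ∏ i, ((-1 / (p : ℂ)) - y i) with hBp'
  have t01 : (p : ℂ) * (((0 : ℂ) - (-1 / (p : ℂ))) * A0) / (((0 : ℂ) - (-1)) * B0)
      = A0 / B0 := by
    field_simp
    ring
  have t11 : (p : ℂ) * (((-1 : ℂ) - (-1 / (p : ℂ))) * A1') / (((-1 : ℂ) - 0) * B1')
      = -((1 - (p : ℂ)) * A1') / B1' := by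
    rw [div_eq_div_iff (by simpa using hB1) hB1]
    linear_combination (-(A1' * B1')) * hpb
  have t0b : (p : ℂ) * (((0 : ℂ) - (-1 / (p : ℂ))) * A0) / (((0 : ℂ) - (-1 / (p : ℂ))) * B0)
      = (p : ℂ) * A0 / B0 := by
    rw [div_eq_div_iff (mul_ne_zero (by simpa using hb0) hB0) hB0]
    ring
  have tbb : (p : ℂ) * (((-1 / (p : ℂ)) - (-1 / (p : ℂ))) * Ap') / (((-1 / (p : ℂ)) - 0) * Bp')
      = 0 := by
    simp [sub_self]
  rw [t01, t11] at ho1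
  rw [t0b, tbb] at hob
  have hS1 : (∑ k, ((p : ℂ) * ((y k - (-1 / (p : ℂ))) * ∏ i, (y k - x i))) /
      ((y k - 0) * ((y k - (-1 : ℂ)) * ∏ i ∈ Finset.univ.erase k, (y k - y i)))) =
      (p : ℂ) - A0 / B0 + (1 - (p : ℂ)) * A1' / B1' := by
    linear_combination ho1
  have hSb : (∑ k, ((p : ℂ) * ((y k - (-1 / (p : ℂ))) * ∏ i, (y k - x i))) /
      ((y k - 0) * ((y k - (-1 / (p : ℂ))) * ∏ i ∈ Finset.univ.erase k, (y k - y i)))) =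
      (p : ℂ) - (p : ℂ) * A0 / B0 := by
    linear_combination hob
  rw [hS1, hSb]
  have hc1 : -B1' / ((p : ℂ) * (((-1 : ℂ) - (-1 / (p : ℂ))) * A1'))
      = -B1' / ((1 - (p : ℂ)) * A1') := by
    congr 1
    linear_combination (-A1') * hpb
  have hc2 : (-1 / (p : ℂ)) * Bp' / ((p : ℂ) * ((((-1 / (p : ℂ)) - (-1)) * Ap')))
      = Bp' / ((p : ℂ) * (1 - (p : ℂ)) * Ap') := by
    rw [div_eq_div_iff (mul_ne_zero hp0 (mul_ne_zero hb1 hAp))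
      (mul_ne_zero (mul_ne_zero hp0 h1p) hAp)]
    field_simp
    ring
  rw [hc1, hc2]
  linear_combination final_alg (p : ℂ) (1 - (p : ℂ)) A0 B0 A1' B1' Ap' Bp' hp0 h1p hB0 hA1 hB1 hAp

end ResidueAux
end

section
/- Let 0 < p < 1, N < L positive integers, and let w_1,…,w_N be complex numbers each satisfying the Bethe equation w^N (1+w)^{L−N} = z^L (1+p w)^N for a fixed nonzero z (with w_i ∉ {0,−1,−1/p}). For a configuration x = (x_1,…,x_N) ∈ ℤ^N with x_N + L > x_1 > x_2 > ⋯ > x_N, define the right eigenfunction Ψ^r_x(w) = ∏_{i=1}^N (1 − p·1[x_{i−1}−x_i=1]) · det[(w_i/(1+p w_i))^{1−j} (1+w_i)^{−x_{N−j+1}+j−1}]_{i,j=1}^N, where x_0 := x_N + L. Then for any 0 ≤ k ≤ N−1, with x' := (x_{N−k+1}+L,…,x_N+L, x_1,…,x_{N−k}), one has Ψ^r_x(w) = (−1)^{k(N−1)} z^{kL} ∏_{i=1}^N [((1+p w_i)/w_i)^k (1+w_i)^k] · Ψ^r_{x'}(w). -/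
open scoped BigOperators

noncomputable def PsiR (L : ℕ) (p : ℝ) {M : ℕ} (x : Fin (M + 1) → ℤ)
    (w : Fin (M + 1) → ℂ) : ℂ :=
  (∏ i : Fin (M + 1),
      (1 - (p : ℂ) *
        (if (if i = 0 then x (Fin.last M) + (L : ℤ) else x (i - 1)) - x i = 1 then 1 else 0))) *
    Matrix.det (Matrix.of fun i j : Fin (M + 1) =>
      (w i / (1 + (p : ℂ) * w i)) ^ (-(j : ℤ)) * (1 + w i) ^ (-(x j.rev) + (j : ℤ)))

private lemma zpow_help1 (u v : ℂ) (hu : u ≠ 0) (hv : v ≠ 0) (a b : ℤ) :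
    v ^ (-a) * u ^ (b + a) = (u * v⁻¹) * (1 * (v ^ (-(a - 1)) * u ^ (b + (a - 1)))) := by
  have h1 : v ^ (-(a - 1)) = v ^ (-a) * v := by
    rw [show -(a - 1) = -a + 1 by ring, zpow_add₀ hv, zpow_one]
  have h2 : u ^ (b + (a - 1)) = u ^ (b + a) * u⁻¹ := by
    rw [show b + (a - 1) = (b + a) + (-1) by ring, zpow_add₀ hu, zpow_neg_one]
  rw [one_mul, h1, h2]
  have e : u * v⁻¹ * (v ^ (-a) * v * (u ^ (b + a) * u⁻¹))
      = (v ^ (-a) * u ^ (b + a)) * ((u * u⁻¹) * (v * v⁻¹)) := by ring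
  rw [e, mul_inv_cancel₀ hu, mul_inv_cancel₀ hv, one_mul, mul_one]

private lemma zpow_help0 (u v : ℂ) (hu : u ≠ 0) (hv : v ≠ 0) (c Mz Lz : ℤ) :
    v ^ (-(0 : ℤ)) * u ^ (-c + 0) =
      (u * v⁻¹) * ((v ^ (Mz + 1) * u ^ (Lz - (Mz + 1))) *
        (v ^ (-Mz) * u ^ (-(c + Lz) + Mz))) := by
  have hv1 : v ^ (Mz + 1) = v ^ Mz * v := by rw [zpow_add₀ hv, zpow_one]
  have hv2 : v ^ (-Mz) = (v ^ Mz)⁻¹ := by rw [zpow_neg]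
  have hu1 : u ^ (Lz - (Mz + 1)) = u ^ Lz * (u ^ Mz)⁻¹ * u⁻¹ := by
    rw [show Lz - (Mz + 1) = Lz + (-Mz) + (-1) by ring, zpow_add₀ hu, zpow_add₀ hu, zpow_neg,
      zpow_neg_one]
  have hu2 : u ^ (-(c + Lz) + Mz) = u ^ (-c) * (u ^ Lz)⁻¹ * u ^ Mz := by
    rw [show -(c + Lz) + Mz = (-c) + (-Lz) + Mz by ring, zpow_add₀ hu, zpow_add₀ hu, zpow_neg, zpow_neg]
  rw [hv1, hv2, hu1, hu2, neg_zero, zpow_zero, add_zero]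
  have hvMz : v ^ Mz ≠ 0 := zpow_ne_zero _ hv
  have huMz : u ^ Mz ≠ 0 := zpow_ne_zero _ hu
  have huLz : u ^ Lz ≠ 0 := zpow_ne_zero _ hu
  have e : u * v⁻¹ * ((v ^ Mz * v * (u ^ Lz * (u ^ Mz)⁻¹ * u⁻¹)) *
        ((v ^ Mz)⁻¹ * (u ^ (-c) * (u ^ Lz)⁻¹ * u ^ Mz)))
      = u ^ (-c) * ((u * u⁻¹) * ((v * v⁻¹) * ((v ^ Mz * (v ^ Mz)⁻¹) *
        ((u ^ Lz * (u ^ Lz)⁻¹) * (u ^ Mz * (u ^ Mz)⁻¹))))) := by ring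
  rw [e, mul_inv_cancel₀ hu, mul_inv_cancel₀ hv, mul_inv_cancel₀ hvMz, mul_inv_cancel₀ huLz,
    mul_inv_cancel₀ huMz, one_mul]
  ring

theorem psiR_shift_one (L : ℕ) (p : ℝ) {M : ℕ} (hML : M + 1 < L) (z : ℂ)
    (x : Fin (M + 1) → ℤ) (w : Fin (M + 1) → ℂ)
    (hw0 : ∀ i, w i ≠ 0) (hw1 : ∀ i, w i ≠ -1) (hwp : ∀ i, 1 + (p : ℂ) * w i ≠ 0)
    (hbethe : ∀ i, w i ^ (M + 1) * (1 + w i) ^ (L - (M + 1)) =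
      z ^ L * (1 + (p : ℂ) * w i) ^ (M + 1)) :
    PsiR L p x w =
      (-1 : ℂ) ^ M * z ^ L *
        (∏ i : Fin (M + 1), ((1 + (p : ℂ) * w i) / w i * (1 + w i))) *
        PsiR L p
          (fun j : Fin (M + 1) => if j = 0 then x (Fin.last M) + (L : ℤ) else x (j - 1)) w := by
  have hu : ∀ i, (1 + w i) ≠ 0 := by
    intro i h
    exact hw1 i (by linear_combination h)
  have hv : ∀ i, w i / (1 + (p : ℂ) * w i) ≠ 0 := fun i => div_ne_zero (hw0 i) (hwp i)
  have hzL : ∀ i, z ^ L =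
      (w i / (1 + (p : ℂ) * w i)) ^ ((M : ℤ) + 1) * (1 + w i) ^ ((L : ℤ) - ((M : ℤ) + 1)) := by
    intro i
    have h1 : ((M : ℤ) + 1) = ((M + 1 : ℕ) : ℤ) := by push_cast; ring
    have h2 : ((L : ℤ) - ((M : ℤ) + 1)) = ((L - (M + 1) : ℕ) : ℤ) := by
      have : M + 1 ≤ L := le_of_lt hML
      push_cast [this]; ring
    rw [h2, h1, zpow_natCast, zpow_natCast, div_pow, div_mul_eq_mul_div,
      eq_div_iff (pow_ne_zero _ (hwp i))]
    exact (hbethe i).symm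
  unfold PsiR
  set x' : Fin (M + 1) → ℤ :=
    fun j : Fin (M + 1) => if j = 0 then x (Fin.last M) + (L : ℤ) else x (j - 1) with hx'
  have h01 : (0 : Fin (M + 1)) - 1 = Fin.last M := by
    apply Fin.ext; simp [Fin.coe_sub_one]
  -- the gaps of x' are the cyclically shifted gaps of x
  have hgap : ∀ j : Fin (M + 1),
      (if j = 0 then x' (Fin.last M) + (L : ℤ) else x' (j - 1)) - x' j
      = (if (j - 1) = 0 then x (Fin.last M) + (L : ℤ) else x ((j - 1) - 1)) - x (j - 1) := by
    intro j
    by_cases hj : j = 0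
    · subst hj
      rw [if_pos rfl, h01]
      simp only [hx']
      split_ifs <;> first | ring | simp_all
    · rw [if_neg hj]
      simp only [hx']
      rw [if_neg hj]
  have hpref :
      (∏ i : Fin (M + 1), ((1:ℂ) - (p : ℂ) *
        (if (if i = 0 then x' (Fin.last M) + (L : ℤ) else x' (i - 1)) - x' i = 1 then 1 else 0)))
      = (∏ i : Fin (M + 1), ((1:ℂ) - (p : ℂ) *
        (if (if i = 0 then x (Fin.last M) + (L : ℤ) else x (i - 1)) - x i = 1 then 1 else 0))) := by
    rw [← Equiv.prod_comp (Equiv.subRight (1 : Fin (M + 1)))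
      (fun i => ((1:ℂ) - (p : ℂ) *
        (if (if i = 0 then x (Fin.last M) + (L : ℤ) else x (i - 1)) - x i = 1 then 1 else 0)))]
    apply Finset.prod_congr rfl
    intro j _
    rw [hgap j]
    rfl
  -- the determinant identity
  set τ : Equiv.Perm (Fin (M + 1)) := (finRotate (M + 1))⁻¹ with hτdef
  have hτ : ∀ j, τ j = j - 1 := by
    intro j
    rw [hτdef, Equiv.Perm.inv_eq_iff_eq, finRotate_succ_apply, sub_add_cancel]
  set B : Matrix (Fin (M + 1)) (Fin (M + 1)) ℂ := Matrix.of fun i j : Fin (M + 1) =>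
      (w i / (1 + (p : ℂ) * w i)) ^ (-(j : ℤ)) * (1 + w i) ^ (-(x' j.rev) + (j : ℤ)) with hB
  have key : ∀ i j : Fin (M + 1),
      (w i / (1 + (p : ℂ) * w i)) ^ (-(j : ℤ)) * (1 + w i) ^ (-(x j.rev) + (j : ℤ))
      = ((1 + w i) * ((w i / (1 + (p : ℂ) * w i)))⁻¹) *
        ((if j = 0 then z ^ L else 1) * (B.submatrix id τ) i j) := by
    intro i j
    have hBτ : (B.submatrix id τ) i j = B i (j - 1) := by
      rw [Matrix.submatrix_apply, hτ j]; rfl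
    rw [hBτ]
    by_cases hj : j = 0
    · subst hj
      rw [if_pos rfl, h01]
      have hrev0 : (0 : Fin (M + 1)).rev = Fin.last M := by simp
      have hrevlast : (Fin.last M).rev = (0 : Fin (M + 1)) := by simp
      have hlastz : ((Fin.last M : Fin (M + 1)) : ℤ) = (M : ℤ) := by simp
      have h0z : ((0 : Fin (M + 1)) : ℤ) = 0 := by simp
      have hBval : B i (Fin.last M) =
          (w i / (1 + (p : ℂ) * w i)) ^ (-(M : ℤ)) *
            (1 + w i) ^ (-(x (Fin.last M) + (L : ℤ)) + (M : ℤ)) := by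
        rw [hB]
        simp only [Matrix.of_apply, hrevlast, hlastz, hx']
        norm_num
      rw [hBval, hrev0, hzL i, h0z]
      exact zpow_help0 (1 + w i) (w i / (1 + (p : ℂ) * w i)) (hu i) (hv i)
        (x (Fin.last M)) (M : ℤ) (L : ℤ)
    · rw [if_neg hj]
      have hjv : 0 < j.val := Fin.pos_of_ne_zero hj
      have hsub : ((j - 1 : Fin (M + 1)) : ℕ) = j.val - 1 := by rw [Fin.coe_sub_one, if_neg hj]
      have hrevval : ((j - 1).rev).val = M + 1 - j.val := by
        rw [Fin.val_rev, hsub]; omega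
      have hrevne : (j - 1).rev ≠ 0 := by
        intro h
        have h2 := congrArg Fin.val h
        rw [hrevval] at h2
        simp only [Fin.val_zero] at h2
        omega
      have hrevsub : ((j - 1).rev - 1) = j.rev := by
        apply Fin.ext
        rw [Fin.coe_sub_one, if_neg hrevne, hrevval, Fin.val_rev]
        omega
      have hcast : ((j - 1 : Fin (M + 1)) : ℤ) = (j : ℤ) - 1 := by omega
      have hBval : B i (j - 1) =
          (w i / (1 + (p : ℂ) * w i)) ^ (-((j : ℤ) - 1)) *
            (1 + w i) ^ (-(x j.rev) + ((j : ℤ) - 1)) := by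
        rw [hB]
        simp only [Matrix.of_apply, hx', hcast]
        rw [if_neg hrevne, hrevsub]
      rw [hBval]
      exact zpow_help1 (1 + w i) (w i / (1 + (p : ℂ) * w i)) (hu i) (hv i) (j : ℤ) (-(x j.rev))
  have hdet :
      (Matrix.of fun i j : Fin (M + 1) =>
        (w i / (1 + (p : ℂ) * w i)) ^ (-(j : ℤ)) * (1 + w i) ^ (-(x j.rev) + (j : ℤ))).det
      = (∏ i : Fin (M + 1), ((1 + w i) * ((w i / (1 + (p : ℂ) * w i)))⁻¹)) *
          ((z ^ L) * (((-1 : ℂ) ^ M) * B.det)) := by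
    have step1 : (Matrix.of fun i j : Fin (M + 1) =>
        (w i / (1 + (p : ℂ) * w i)) ^ (-(j : ℤ)) * (1 + w i) ^ (-(x j.rev) + (j : ℤ)))
        = Matrix.of fun i j : Fin (M + 1) =>
            ((1 + w i) * ((w i / (1 + (p : ℂ) * w i)))⁻¹) *
            ((Matrix.of fun i j : Fin (M + 1) =>
              (if j = 0 then z ^ L else 1) * (B.submatrix id τ) i j) i j) := by
      ext i j
      simp only [Matrix.of_apply]
      exact key i j
    rw [step1, Matrix.det_mul_column, Matrix.det_mul_row, Matrix.det_permute']
    have hsign : ((Equiv.Perm.sign τ : ℤ) : ℂ) = (-1 : ℂ) ^ M := by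
      rw [hτdef]; simp [sign_finRotate]
    have hprodite : (∏ j : Fin (M + 1), (if j = 0 then z ^ L else (1 : ℂ))) = z ^ L := by
      simp
    rw [hprodite, hsign]
  have hc : (∏ i : Fin (M + 1), ((1 + w i) * ((w i / (1 + (p : ℂ) * w i)))⁻¹))
      = (∏ i : Fin (M + 1), ((1 + (p : ℂ) * w i) / w i * (1 + w i))) := by
    apply Finset.prod_congr rfl
    intro i _
    rw [inv_div]
    ring
  rw [hdet, hpref, hc]
  ring

/-- Cyclic-shift covariance of the right eigenfunction: for spectral parameters
satisfying the Bethe equation and a configuration `x` with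
`x_{M+1} + L > x_1 > ⋯ > x_{M+1}`, shifting the configuration cyclically by `k`
(i.e. `x' = (x_{M+1−k+1}+L,…,x_{M+1}+L, x_1,…,x_{M+1−k})`) multiplies `Ψ^r` by
`(−1)^{kM} z^{kL} ∏_i ((1+pw_i)/w_i)^k (1+w_i)^k`. -/
theorem psiR_cyclic_shift (L : ℕ) (p : ℝ) (hp : 0 < p) (hp1 : p < 1)
    (M : ℕ) (hML : M + 1 < L) (z : ℂ) (hz : z ≠ 0)
    (x : Fin (M + 1) → ℤ)
    (hxdec : ∀ i j : Fin (M + 1), i < j → x j < x i)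
    (hxper : x 0 < x (Fin.last M) + (L : ℤ))
    (w : Fin (M + 1) → ℂ)
    (hw0 : ∀ i, w i ≠ 0) (hw1 : ∀ i, w i ≠ -1) (hwp : ∀ i, 1 + (p : ℂ) * w i ≠ 0)
    (hbethe : ∀ i, w i ^ (M + 1) * (1 + w i) ^ (L - (M + 1)) =
      z ^ L * (1 + (p : ℂ) * w i) ^ (M + 1))
    (k : ℕ) (hk : k ≤ M) :
    PsiR L p x w =
      (-1 : ℂ) ^ (k * M) * z ^ (k * L) *
        (∏ i : Fin (M + 1), (((1 + (p : ℂ) * w i) / w i) ^ k * (1 + w i) ^ k)) *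
        PsiR L p
          (fun j => if h : (j : ℕ) < k
            then x ⟨M + 1 - k + (j : ℕ), by omega⟩ + (L : ℤ)
            else x ⟨(j : ℕ) - k, by have := j.isLt; omega⟩)
          w := by
  clear hp hp1 hxdec hxper hz
  revert hk
  induction k with
  | zero =>
    intro hk
    have hfn : (fun j : Fin (M + 1) => if h : (j : ℕ) < 0
        then x ⟨M + 1 - 0 + (j : ℕ), by omega⟩ + (L : ℤ)
        else x ⟨(j : ℕ) - 0, by have := j.isLt; omega⟩) = x := by
      funext j
      rw [dif_neg (Nat.not_lt_zero _)]
      exact congrArg x (Fin.ext (by simp))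
    rw [hfn]
    simp
  | succ n ih =>
    intro hk
    have hn : n ≤ M := by omega
    rw [ih hn]
    set y : Fin (M + 1) → ℤ := fun j => if h : (j : ℕ) < n
        then x ⟨M + 1 - n + (j : ℕ), by omega⟩ + (L : ℤ)
        else x ⟨(j : ℕ) - n, by have := j.isLt; omega⟩ with hy
    rw [psiR_shift_one L p hML z y w hw0 hw1 hwp hbethe]
    have hfun : (fun j : Fin (M + 1) => if j = 0 then y (Fin.last M) + (L : ℤ) else y (j - 1))
        = (fun j : Fin (M + 1) => if h : (j : ℕ) < n + 1
            then x ⟨M + 1 - (n + 1) + (j : ℕ), by omega⟩ + (L : ℤ)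
            else x ⟨(j : ℕ) - (n + 1), by have := j.isLt; omega⟩) := by
      funext j
      by_cases hj : j = 0
      · subst hj
        rw [if_pos rfl, hy]
        simp only
        rw [dif_neg (by simp only [Fin.val_last]; omega : ¬ ((Fin.last M : Fin (M+1)) : ℕ) < n),
          dif_pos (by simp only [Fin.val_zero]; omega : ((0 : Fin (M + 1)) : ℕ) < n + 1)]
        congr 2
        exact Fin.ext (by simp only [Fin.val_last, Fin.val_zero]; omega)
      · rw [if_neg hj, hy]
        have hjv : 0 < (j : ℕ) := Fin.pos_of_ne_zero hj
        have hsub : ((j - 1 : Fin (M + 1)) : ℕ) = (j : ℕ) - 1 := by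
          rw [Fin.coe_sub_one, if_neg hj]
        simp only
        by_cases hc : ((j - 1 : Fin (M + 1)) : ℕ) < n
        · rw [dif_pos hc, dif_pos (by omega : (j : ℕ) < n + 1)]
          congr 2
          exact Fin.ext (by simp only; omega)
        · rw [dif_neg hc, dif_neg (by omega : ¬ (j : ℕ) < n + 1)]
          congr 1
          exact Fin.ext (by simp only; omega)
    rw [hfun]
    have hprodsucc : (∏ i : Fin (M + 1),
          (((1 + (p : ℂ) * w i) / w i) ^ (n + 1) * (1 + w i) ^ (n + 1)))
        = (∏ i : Fin (M + 1), (((1 + (p : ℂ) * w i) / w i) ^ n * (1 + w i) ^ n)) *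
          (∏ i : Fin (M + 1), ((1 + (p : ℂ) * w i) / w i * (1 + w i))) := by
      rw [← Finset.prod_mul_distrib]
      apply Finset.prod_congr rfl
      intro i _
      ring
    rw [hprodsucc, show (n + 1) * M = n * M + M by ring, show (n + 1) * L = n * L + L by ring,
      pow_add, pow_add]
    ring
end

section
/- Let 0 < p < 1 and let G : ℤ^N → ℂ satisfy the discrete-time free evolution equation G(x, t+1) = ∑_{b ∈ {0,1}^N} ∏_{i=1}^N p^{b_i}(1−p)^{1−b_i} G(x − b, t) together with the boundary condition (1−p)[G(…, x_i+1, x_i, …, t) − G(…, x_i, x_i, …, t)] = p[G(…, x_i, x_i−1, …, t) − G(…, x_i+1, x_i−1, …, t)] (where in the two entries shown, positions i−1 and i of the argument vector are displayed). Then for any x ∈ ℤ^N such that the coordinates x_i, x_{i−1}, …, x_{i−m} satisfy x_i = x_{i−1} − 1 = ⋯ = x_{i−m} − m (a block of m+1 adjacent values), one has ∑_{b_i ∈{0,1}} p^{b_i}(1−p)^{1−b_i} G(x − b_i e_i, t) = ∑_{b_j ∈ {0,1}, j = i−m,…,i} ∏_j p^{b_j}(1−p)^{1−b_j} G(x − ∑_j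 b_j e_j, t), where e_j is the j-th standard basis vector. -/
open scoped BigOperators

private def snocE (k : ℕ) : ((Fin k → Bool) × Bool) ≃ (Fin (k + 1) → Bool) where
  toFun cb := Fin.snoc cb.1 cb.2
  invFun c := (fun r => c r.castSucc, c (Fin.last k))
  left_inv := fun ⟨c, b⟩ => by simp
  right_inv := fun c => by
    funext r
    rcases Fin.eq_castSucc_or_eq_last r with ⟨r', rfl⟩ | rfl <;> simp

private lemma sum_snoc_split {k : ℕ} (F : (Fin (k + 1) → Bool) → ℂ) :
    ∑ c : Fin (k + 1) → Bool, F c =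
      ∑ c : Fin k → Bool, ∑ b : Bool, F (Fin.snoc c b) := by
  rw [← Equiv.sum_comp (snocE k) F, Fintype.sum_prod_type]
  rfl

private lemma step' {N : ℕ} {p : ℝ} {G : (Fin N → ℤ) → ℕ → ℂ}
    (hbc : ∀ (x : Fin N → ℤ) (t : ℕ) (i j : Fin N), (j : ℕ) + 1 = (i : ℕ) → ∀ y : ℤ,
      (1 - (p : ℂ)) *
          (G (Function.update (Function.update x j (y + 1)) i y) t -
            G (Function.update (Function.update x j y) i y) t) =
        (p : ℂ) *
          (G (Function.update (Function.update x j y) i (y - 1)) t -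
            G (Function.update (Function.update x j (y + 1)) i (y - 1)) t))
    (x' : Fin N → ℤ) (t : ℕ) (j i' : Fin N) (hji : (j : ℕ) + 1 = (i' : ℕ))
    (hx' : x' j = x' i' + 1) :
    (1 - (p:ℂ)) * G x' t + (p:ℂ) * G (x' - Pi.single i' 1) t
      = (1 - (p:ℂ)) * (1 - (p:ℂ)) * G x' t
        + (1 - (p:ℂ)) * (p:ℂ) * G (x' - Pi.single j 1) t
        + (p:ℂ) * (1 - (p:ℂ)) * G (x' - Pi.single i' 1) t
        + (p:ℂ) * (p:ℂ) * G (x' - Pi.single i' 1 - Pi.single j 1) t := by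
  have key := hbc x' t i' j hji (x' i')
  have hA : Function.update (Function.update x' j (x' i' + 1)) i' (x' i') = x' := by
    rw [← hx', Function.update_eq_self, Function.update_eq_self]
  have hB : Function.update (Function.update x' j (x' i')) i' (x' i') = x' - Pi.single j 1 := by
    funext k
    simp only [Function.update_apply, Pi.sub_apply, Pi.single_apply]
    split_ifs <;> subst_vars <;> omega
  have hC : Function.update (Function.update x' j (x' i')) i' (x' i' - 1)
      = x' - Pi.single i' 1 - Pi.single j 1 := by
    funext k
    simp only [Function.update_apply, Pi.sub_apply, Pi.single_apply]
    split_ifs <;> subst_vars <;> omega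
  have hD : Function.update (Function.update x' j (x' i' + 1)) i' (x' i' - 1)
      = x' - Pi.single i' 1 := by
    funext k
    simp only [Function.update_apply, Pi.sub_apply, Pi.single_apply]
    split_ifs <;> subst_vars <;> omega
  rw [hA, hB, hC, hD] at key
  linear_combination (p:ℂ) * key

/-- Cluster reduction for the free evolution with boundary conditions: if
`G : ℤ^N × ℕ → ℂ` satisfies the discrete-time free evolution equation
`G(x,t+1) = ∑_{b∈{0,1}^N} ∏_i p^{b_i}(1−p)^{1−b_i} G(x−b,t)` and the boundary
condition
`(1−p)[G(…,y+1,y,…) − G(…,y,y,…)] = p[G(…,y,y−1,…) − G(…,y+1,y−1,…)]`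
(values displayed at adjacent positions `i−1, i`), then for any `x` whose
coordinates at positions `i−m,…,i` form a block `x_i = x_{i−1}−1 = ⋯ = x_{i−m}−m`,
the one-site update of coordinate `i` equals the full product update of the block:
`∑_{b_i∈{0,1}} p^{b_i}(1−p)^{1−b_i} G(x − b_i e_i, t)
 = ∑_{b_j∈{0,1}, j=i−m,…,i} ∏_j p^{b_j}(1−p)^{1−b_j} G(x − ∑_j b_j e_j, t)`. -/
theorem cluster_reduction (N : ℕ) (p : ℝ) (hp : 0 < p) (hp1 : p < 1)
    (G : (Fin N → ℤ) → ℕ → ℂ)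
    (hfree : ∀ (x : Fin N → ℤ) (t : ℕ),
      G x (t + 1) = ∑ b : Fin N → Bool,
        (∏ s, if b s then (p : ℂ) else 1 - (p : ℂ)) *
          G (x - fun s => if b s then 1 else 0) t)
    (hbc : ∀ (x : Fin N → ℤ) (t : ℕ) (i j : Fin N), (j : ℕ) + 1 = (i : ℕ) → ∀ y : ℤ,
      (1 - (p : ℂ)) *
          (G (Function.update (Function.update x j (y + 1)) i y) t -
            G (Function.update (Function.update x j y) i y) t) =
        (p : ℂ) *
          (G (Function.update (Function.update x j y) i (y - 1)) t -
            G (Function.update (Function.update x j (y + 1)) i (y - 1)) t))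
    (x : Fin N → ℤ) (t : ℕ) (i : Fin N) (m : ℕ) (hm : m ≤ (i : ℕ))
    (hx : ∀ r : Fin (m + 1),
      x ⟨(i : ℕ) - (r : ℕ), by have := i.isLt; omega⟩ = x i + (r : ℕ)) :
    ∑ b : Bool, (if b then (p : ℂ) else 1 - (p : ℂ)) *
        G (x - if b then Pi.single i 1 else 0) t =
      ∑ c : Fin (m + 1) → Bool,
        (∏ r, if c r then (p : ℂ) else 1 - (p : ℂ)) *
          G (x - ∑ r : Fin (m + 1),
              if c r then
                Pi.single (⟨(i : ℕ) - (r : ℕ), by have := i.isLt; omega⟩ : Fin N) (1 : ℤ)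
              else 0) t := by
  revert hm hx
  induction m with
  | zero =>
      intro hm hx
      rw [sum_snoc_split]
      conv_rhs => rw [Fintype.sum_unique]
      refine Finset.sum_congr rfl fun b _ => ?_
      simp only [Fin.prod_univ_succ, Fin.sum_univ_succ, Finset.univ_eq_empty,
        Finset.prod_empty, Finset.sum_empty, mul_one, add_zero]
      rfl
  | succ n ih =>
      intro hm hx
      have hiN : (i : ℕ) < N := i.isLt
      have hm' : n ≤ (i : ℕ) := by omega
      have hx' : ∀ r : Fin (n + 1), x ⟨(i : ℕ) - (r : ℕ), by omega⟩ = x i + (r : ℕ) :=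
        fun r => hx ⟨r.1, by omega⟩
      rw [ih hm' hx']
      have pfj : (i : ℕ) - (n + 1) < N := by omega
      have pfi : (i : ℕ) - n < N := by omega
      have pfr : ∀ r : Fin n, (i : ℕ) - (r : ℕ) < N := fun r => by omega
      rw [sum_snoc_split, sum_snoc_split, sum_snoc_split]
      refine Finset.sum_congr rfl fun d _ => ?_
      have hV0 : ∀ u : Fin N, (∀ r : Fin n, (i : ℕ) - (r : ℕ) ≠ (u : ℕ)) →
          ((∑ r : Fin n, if d r then Pi.single (⟨(i : ℕ) - (r : ℕ), pfr r⟩ : Fin N) (1 : ℤ)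
            else 0 : Fin N → ℤ)) u = 0 := by
        intro u hu
        rw [Finset.sum_apply]
        refine Finset.sum_eq_zero fun r _ => ?_
        have hne : u ≠ (⟨(i : ℕ) - (r : ℕ), pfr r⟩ : Fin N) := fun heq => hu r (by rw [heq])
        cases hdr : d r <;> simp [hdr, Pi.single_eq_of_ne hne]
      have e1 : x ⟨(i : ℕ) - (n + 1), pfj⟩ = x i + ((n + 1 : ℕ) : ℤ) := hx ⟨n + 1, by omega⟩
      have e2 : x ⟨(i : ℕ) - n, pfi⟩ = x i + ((n : ℕ) : ℤ) := hx ⟨n, by omega⟩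
      have hji2 : ((⟨(i : ℕ) - (n + 1), pfj⟩ : Fin N) : ℕ) + 1
          = ((⟨(i : ℕ) - n, pfi⟩ : Fin N) : ℕ) := by
        show (i : ℕ) - (n + 1) + 1 = (i : ℕ) - n
        omega
      have hxV : ((x - ∑ r : Fin n, if d r then
            Pi.single (⟨(i : ℕ) - (r : ℕ), pfr r⟩ : Fin N) (1 : ℤ) else 0 : Fin N → ℤ))
              ⟨(i : ℕ) - (n + 1), pfj⟩
          = ((x - ∑ r : Fin n, if d r then
            Pi.single (⟨(i : ℕ) - (r : ℕ), pfr r⟩ : Fin N) (1 : ℤ) else 0 : Fin N → ℤ))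
              ⟨(i : ℕ) - n, pfi⟩ + 1 := by
        rw [Pi.sub_apply, Pi.sub_apply,
          hV0 _ (fun r => by show (i : ℕ) - (r : ℕ) ≠ (i : ℕ) - (n + 1); have := r.2; omega),
          hV0 _ (fun r => by show (i : ℕ) - (r : ℕ) ≠ (i : ℕ) - n; have := r.2; omega), e1, e2]
        push_cast
        ring
      have key := step' hbc
        (x - ∑ r : Fin n, if d r then
          Pi.single (⟨(i : ℕ) - (r : ℕ), pfr r⟩ : Fin N) (1 : ℤ) else 0) t
        ⟨(i : ℕ) - (n + 1), pfj⟩ ⟨(i : ℕ) - n, pfi⟩ hji2 hxV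
      simp only [Fin.prod_univ_castSucc, Fin.sum_univ_castSucc, Fin.snoc_castSucc,
        Fin.snoc_last, Fin.coe_castSucc, Fin.val_last, Fintype.sum_bool, if_true, if_false, Bool.false_eq_true, Bool.true_eq_false,
        sub_zero, add_zero, sub_add_eq_sub_sub]
      linear_combination (∏ r : Fin n, if d r then (p : ℂ) else 1 - (p : ℂ)) * key
end
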